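/- Let R be a commutative ring and x₁,…,x_l an unconditioned strong d-sequence in R (i.e. x₁^{n₁},…,x_l^{n_l} forms a d-sequence in every order for all positive integers n₁,…,n_l). Then for all positive integers n₁,…,n_l, every proper subset Λ ⊊ {1,…,l}, and every j ∈ {1,…,l} ∖ Λ: ((Σ_{i∈Λ} x_i^{n_i} R) : x_j^{n_j}) = ((Σ_{i∈Λ} x_i^{n_i} R) : x_j) = ((Σ_{i∈Λ} x_i^{n_i} R) : Σ_{i∉Λ} x_i R). -/

import Mathlib

/-- `x₁, …, x_l` is a d-sequence: `((x₁,…,x_j) : x_{j+1} x_k) = ((x₁,…,x_j) : x_k)`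
for all `0 ≤ j < k ≤ l`.  Here `x` is `0`-indexed: `x j` plays the role of `x_{j+1}`,
and the condition is stated for `j ≤ k` (`0`-based). -/
def IsDSeq {R : Type*} [CommRing R] {l : ℕ} (x : Fin l → R) : Prop :=
  ∀ j k : Fin l, j ≤ k →
    (Ideal.span (x '' {i | i < j})).colon (Ideal.span {x j * x k}) =
      (Ideal.span (x '' {i | i < j})).colon (Ideal.span {x k})

/-- `x₁, …, x_l` is an unconditioned strong d-sequence: `x₁^{n₁}, …, x_l^{n_l}` is a
d-sequence in any order, for all positive integers `n₁, …, n_l`. -/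
def IsUSD {R : Type*} [CommRing R] {l : ℕ} (x : Fin l → R) : Prop :=
  ∀ n : Fin l → ℕ, (∀ i, 0 < n i) → ∀ σ : Equiv.Perm (Fin l),
    IsDSeq (fun i => x (σ i) ^ n (σ i))

section Aux

variable {R : Type*} [CommRing R]

lemma mem_colon_span_iff {I : Ideal R} {S : Set R} {r : R} :
    r ∈ I.colon (Ideal.span S) ↔ ∀ s ∈ S, r * s ∈ I := by
  constructor
  · intro h s hs
    exact Ideal.mem_colon_span_singleton.mp
      (Submodule.colon_mono le_rfl
        (Ideal.span_mono (Set.singleton_subset_iff.mpr hs)) h)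
  · intro h
    rw [Submodule.mem_colon]
    intro p hp
    induction hp using Submodule.span_induction with
    | mem a ha => simpa [smul_eq_mul] using h a ha
    | zero => simp
    | add a b _ _ ha hb => simpa [mul_add] using I.add_mem ha hb
    | smul c a _ ha =>
        rw [smul_eq_mul, smul_eq_mul, mul_comm c a, ← mul_assoc]
        exact I.mul_mem_right c ha

/-- Key application of the USD property: for `j, k ∉ Λ` (possibly equal),
`((x_i^{m_i}, i ∈ Λ) : x_j^{m_j} x_k^{m_k}) = ((x_i^{m_i}, i ∈ Λ) : x_k^{m_k})`. -/
lemma dseq_colon {l : ℕ} (x : Fin l → R) (hx : IsUSD x) (m : Fin l → ℕ)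
    (hm : ∀ i, 0 < m i) (Λ : Set (Fin l)) {j k : Fin l} (hj : j ∉ Λ) (hk : k ∉ Λ) :
    (Ideal.span ((fun i => x i ^ m i) '' Λ)).colon
        (Ideal.span {x j ^ m j * x k ^ m k}) =
      (Ideal.span ((fun i => x i ^ m i) '' Λ)).colon (Ideal.span {x k ^ m k}) := by
  classical
  have hsl : Fintype.card Λ < l := by
    simpa using Fintype.card_subtype_lt (p := (· ∈ Λ)) hj
  set s : ℕ := Fintype.card Λ with hs
  set p : Fin l := ⟨s, hsl⟩ with hp
  set S : Set (Fin l) := {i | i < p} with hS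
  -- an equivalence from the initial segment `S` to `Λ`
  let eS0 : S ≃ Fin s :=
    { toFun := fun i => ⟨(i : Fin l).1, i.2⟩
      invFun := fun i => ⟨⟨i.1, i.2.trans hsl⟩, i.2⟩
      left_inv := fun i => rfl
      right_inv := fun i => rfl }
  let eS : S ≃ Λ := eS0.trans (Fintype.equivFin Λ).symm
  have cardcompl : Fintype.card (Sᶜ : Set (Fin l)) = Fintype.card (Λᶜ : Set (Fin l)) := by
    rw [Fintype.card_compl_set, Fintype.card_compl_set, Fintype.card_congr eS0]
    simp [hs, Fintype.card_subtype]
  let f0 : (Sᶜ : Set (Fin l)) ≃ (Λᶜ : Set (Fin l)) := Fintype.equivOfCardEq cardcompl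
  have pS : p ∈ (Sᶜ : Set (Fin l)) := by simp [hS]
  have jΛ : j ∈ (Λᶜ : Set (Fin l)) := hj
  let eSc : (Sᶜ : Set (Fin l)) ≃ (Λᶜ : Set (Fin l)) :=
    f0.trans (Equiv.swap (f0 ⟨p, pS⟩) ⟨j, jΛ⟩)
  have eScp : eSc ⟨p, pS⟩ = ⟨j, jΛ⟩ := by
    simp [eSc, Equiv.swap_apply_left]
  -- the permutation placing `Λ` first and `j` right after it
  let σ : Equiv.Perm (Fin l) :=
    (Equiv.Set.sumCompl S).symm.trans ((eS.sumCongr eSc).trans (Equiv.Set.sumCompl Λ))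
  have hσ_mem : ∀ i (hi : i ∈ S), σ i = (eS ⟨i, hi⟩ : Fin l) := by
    intro i hi
    have h1 : (Equiv.Set.sumCompl S).symm i = Sum.inl ⟨i, hi⟩ :=
      Equiv.Set.sumCompl_symm_apply_of_mem hi
    simp [σ, Equiv.trans_apply, h1]
  have hσ_not : ∀ i (hi : i ∉ S), σ i = (eSc ⟨i, hi⟩ : Fin l) := by
    intro i hi
    have h1 : (Equiv.Set.sumCompl S).symm i = Sum.inr ⟨i, hi⟩ :=
      Equiv.Set.sumCompl_symm_apply_of_notMem hi
    simp [σ, Equiv.trans_apply, h1]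
  have hσp : σ p = j := by rw [hσ_not p pS, eScp]
  have hσimg : σ '' S = Λ := by
    apply Set.eq_of_subset_of_subset
    · rintro _ ⟨i, hi, rfl⟩
      rw [hσ_mem i hi]
      exact (eS ⟨i, hi⟩).2
    · intro a ha
      have hbS : σ.symm a ∈ S := by
        by_contra hb
        have := hσ_not _ hb
        rw [Equiv.apply_symm_apply] at this
        exact (eSc ⟨σ.symm a, hb⟩).2 (this ▸ ha)
      exact ⟨σ.symm a, hbS, Equiv.apply_symm_apply σ a⟩
  set q : Fin l := σ.symm k with hq
  have hσq : σ q = k := Equiv.apply_symm_apply σ k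
  have hqS : q ∉ S := by
    intro hqS
    have : σ q ∈ Λ := by rw [hσ_mem q hqS]; exact (eS ⟨q, hqS⟩).2
    rw [hσq] at this
    exact hk this
  have hpq : p ≤ q := le_of_not_gt hqS
  have hd := hx m hm σ p q hpq
  have himg : (fun i => x (σ i) ^ m (σ i)) '' {i | i < p} = (fun i => x i ^ m i) '' Λ := by
    rw [← hσimg, ← Set.image_comp]
    rfl
  simp only [himg, hσp, hσq] at hd
  exact hd

end Aux

/-- Goto–Yamagishi: for an unconditioned strong d-sequence `x₁,…,x_l`,
positive integers `n₁,…,n_l`, a proper subset `Λ ⊊ {1,…,l}` and `j ∉ Λ`,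
`((Σ_{i∈Λ} x_i^{n_i}) : x_j^{n_j}) = ((Σ_{i∈Λ} x_i^{n_i}) : x_j)
  = ((Σ_{i∈Λ} x_i^{n_i}) : Σ_{i∉Λ} x_i)`. -/
theorem usd_unmixed_colon {R : Type*} [CommRing R] {l : ℕ} (x : Fin l → R)
    (hx : IsUSD x) (n : Fin l → ℕ) (hn : ∀ i, 0 < n i)
    (Λ : Set (Fin l)) (hΛ : Λ ≠ Set.univ) (j : Fin l) (hj : j ∉ Λ) :
    (Ideal.span ((fun i => x i ^ n i) '' Λ)).colon (Ideal.span {x j ^ n j}) =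
        (Ideal.span ((fun i => x i ^ n i) '' Λ)).colon (Ideal.span {x j}) ∧
      (Ideal.span ((fun i => x i ^ n i) '' Λ)).colon (Ideal.span {x j}) =
        (Ideal.span ((fun i => x i ^ n i) '' Λ)).colon (Ideal.span (x '' Λᶜ)) := by
  classical
  set I : Ideal R := Ideal.span ((fun i => x i ^ n i) '' Λ) with hI
  have hIeq : ∀ m' : Fin l → ℕ, (∀ i ∈ Λ, m' i = n i) →
      (fun i => x i ^ m' i) '' Λ = (fun i => x i ^ n i) '' Λ := by
    intro m' hm'
    exact Set.image_congr fun a ha => by rw [hm' a ha]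
  -- doubling: (I : x_j^{2t}) = (I : x_j^t)
  have hdouble : ∀ t : ℕ, 0 < t →
      I.colon (Ideal.span {x j ^ (t + t)}) = I.colon (Ideal.span {x j ^ t}) := by
    intro t ht
    have hd := dseq_colon x hx (fun i => if i ∈ Λ then n i else t)
      (fun i => by split <;> [exact hn i; exact ht]) Λ hj hj
    simp only [if_neg hj] at hd
    rw [hIeq _ (fun i hi => if_pos hi), ← pow_add] at hd
    exact hd
  -- monotonicity of colon in the exponent
  have hmono : ∀ a b : ℕ, a ≤ b →
      I.colon (Ideal.span {x j ^ a}) ≤ I.colon (Ideal.span {x j ^ b}) := by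
    intro a b hab r hr
    rw [Ideal.mem_colon_span_singleton] at hr ⊢
    have hb : x j ^ b = x j ^ a * x j ^ (b - a) := by
      rw [← pow_add, Nat.add_sub_cancel' hab]
    rw [hb, ← mul_assoc]
    exact I.mul_mem_right _ hr
  -- (I : x_j^{2^e}) = (I : x_j)
  have h2 : ∀ e : ℕ, I.colon (Ideal.span {x j ^ 2 ^ e}) = I.colon (Ideal.span {x j}) := by
    intro e
    induction e with
    | zero => rw [pow_zero, pow_one]
    | succ e ih =>
        have : (2 : ℕ) ^ (e + 1) = 2 ^ e + 2 ^ e := by rw [pow_succ, mul_two]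
        rw [this, hdouble _ (Nat.pow_pos (n := e) two_pos), ih]
  -- (I : x_j^t) = (I : x_j) for all positive t
  have hpow : ∀ t : ℕ, 0 < t →
      I.colon (Ideal.span {x j ^ t}) = I.colon (Ideal.span {x j}) := by
    intro t ht
    refine le_antisymm ?_ ?_
    · calc I.colon (Ideal.span {x j ^ t}) ≤ I.colon (Ideal.span {x j ^ 2 ^ t}) :=
            hmono t (2 ^ t) (Nat.lt_two_pow_self (n := t)).le
        _ = I.colon (Ideal.span {x j}) := h2 t
    · have := hmono 1 t ht
      simpa [pow_one] using this
  refine ⟨hpow (n j) (hn j), le_antisymm ?_ ?_⟩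
  · intro r hr
    rw [mem_colon_span_iff]
    rintro _ ⟨k, hk, rfl⟩
    by_cases hkj : k = j
    · subst hkj
      exact Ideal.mem_colon_span_singleton.mp hr
    · have hd := dseq_colon x hx (fun i => if i ∈ Λ then n i else 1)
        (fun i => by split <;> [exact hn i; exact one_pos]) Λ hj hk
      simp only [if_neg hj, if_neg hk, pow_one] at hd
      rw [hIeq _ (fun i hi => if_pos hi)] at hd
      have hmem : r * (x j * x k) ∈ I := by
        rw [← mul_assoc]
        exact I.mul_mem_right _ (Ideal.mem_colon_span_singleton.mp hr)
      have : r ∈ I.colon (Ideal.span {x k}) := hd ▸ Ideal.mem_colon_span_singleton.mpr hmem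
      exact Ideal.mem_colon_span_singleton.mp this
  · exact Submodule.colon_mono le_rfl
      (Ideal.span_mono (Set.singleton_subset_iff.mpr ⟨j, hj, rfl⟩))
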